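/- Let D₁ and D₂ be real Banach spaces, each equipped with a partial order making it an ordered vector space. Suppose the positive cone D₁⁺ = {x ∈ D₁ : 0 ≤ x} is closed and generating (D₁ = D₁⁺ − D₁⁺), and the positive cone D₂⁺ is closed. Let T : D₁ → D₂ be a linear map that is order bounded (T maps every order interval [u, v] = {x : u ≤ x ≤ v} into some order interval of D₂). Then T is continuous. -/

import Mathlib

open Filter Topology

section Helpers

variable {D : Type*} [NormedAddCommGroup D] [NormedSpace ℝ D]
  [PartialOrder D] [CovariantClass D D (· + ·) (· ≤ ·)]

private lemma cone_sum_nonneg {f : ℕ → D} (h : ∀ n, 0 ≤ f n) (s : Finset ℕ) :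
    0 ≤ ∑ i ∈ s, f i :=
  Finset.sum_induction f (fun x => 0 ≤ x) (fun _ _ ha hb => add_nonneg ha hb) le_rfl
    (fun x _ => h x)

private lemma tcone_sum_nonneg (hclosed : IsClosed {x : D | 0 ≤ x}) {f : ℕ → D}
    (hf : Summable f) (h : ∀ n, 0 ≤ f n) : 0 ≤ ∑' n, f n := by
  have ht := hf.hasSum.tendsto_sum_nat
  exact hclosed.mem_of_tendsto ht (Eventually.of_forall fun n => cone_sum_nonneg h _)

private lemma cone_le_tsum (hclosed : IsClosed {x : D | 0 ≤ x}) {f : ℕ → D}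
    (hf : Summable f) (h : ∀ n, 0 ≤ f n) (k : ℕ) : f k ≤ ∑' n, f n := by
  classical
  have hs : Summable (fun n => if n = k then 0 else f n) := by
    have he : (fun n => if n = k then 0 else f n)
        = fun n => f n - (if n = k then f n else 0) := by
      funext n; by_cases hn : n = k <;> simp [hn]
    rw [he]
    refine hf.sub (summable_of_ne_finset_zero (s := {k}) ?_)
    intro b hb
    simp only [Finset.mem_singleton] at hb
    simp [hb]
  rw [Summable.tsum_eq_add_tsum_ite hf k]
  refine le_add_of_nonneg_right (tcone_sum_nonneg hclosed hs fun n => ?_)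
  by_cases hn : n = k <;> simp [hn, h n]

private lemma cone_smul_le_smul (hsmul : ∀ (c : ℝ) (x : D), 0 ≤ c → 0 ≤ x → 0 ≤ c • x)
    {c : ℝ} (hc : 0 ≤ c) {a b : D} (h : a ≤ b) : c • a ≤ c • b := by
  have := hsmul c (b - a) hc (sub_nonneg.mpr h)
  rw [smul_sub] at this
  exact sub_nonneg.mp this

/-- Andô-type decomposition: in a Banach space with closed generating cone,
the decomposition can be taken with norm control. -/
private lemma ando {D : Type*} [NormedAddCommGroup D] [NormedSpace ℝ D] [CompleteSpace D]
    [PartialOrder D] [CovariantClass D D (· + ·) (· ≤ ·)]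
    (hsmul : ∀ (c : ℝ) (x : D), 0 ≤ c → 0 ≤ x → 0 ≤ c • x)
    (hclosed : IsClosed {x : D | 0 ≤ x})
    (hgen : ∀ x : D, ∃ y z : D, 0 ≤ y ∧ 0 ≤ z ∧ x = y - z) :
    ∃ M : ℝ, 0 < M ∧ ∀ x : D, ∃ y z : D,
      0 ≤ y ∧ 0 ≤ z ∧ x = y - z ∧ ‖y‖ ≤ M * ‖x‖ ∧ ‖z‖ ≤ M * ‖x‖ := by
  classical
  set S : ℕ → Set D := fun n =>
    {x | ∃ y z : D, 0 ≤ y ∧ 0 ≤ z ∧ ‖y‖ ≤ (n : ℝ) ∧ ‖z‖ ≤ (n : ℝ) ∧ x = y - z} with hS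
  -- the closures of the S n cover D
  have hcover : (⋃ n, closure (S n)) = Set.univ := by
    refine Set.eq_univ_of_forall fun x => ?_
    obtain ⟨y, z, hy, hz, hx⟩ := hgen x
    obtain ⟨n, hn⟩ := exists_nat_ge (max ‖y‖ ‖z‖)
    refine Set.mem_iUnion.mpr ⟨n, subset_closure ?_⟩
    exact ⟨y, z, hy, hz, le_trans (le_max_left _ _) hn, le_trans (le_max_right _ _) hn, hx⟩
  obtain ⟨n, a, ha⟩ := nonempty_interior_of_iUnion_of_closed
    (fun n => isClosed_closure (s := S n)) hcover
  rw [mem_interior_iff_mem_nhds] at ha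
  obtain ⟨r, hr, hball⟩ := Metric.mem_nhds_iff.mp ha
  -- closure (S n) is symmetric
  have hsymm : ∀ w ∈ closure (S n), -w ∈ closure (S n) := by
    intro w hw
    obtain ⟨u, hu, hul⟩ := mem_closure_iff_seq_limit.mp hw
    refine mem_closure_iff_seq_limit.mpr ⟨fun k => -(u k), fun k => ?_, hul.neg⟩
    obtain ⟨y, z, hy, hz, hyn, hzn, huk⟩ := hu k
    exact ⟨z, y, hz, hy, hzn, hyn, by simp only [huk]; abel⟩
  -- closure (S n) is closed under midpoints
  have hmid : ∀ w₁ ∈ closure (S n), ∀ w₂ ∈ closure (S n),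
      (1/2 : ℝ) • (w₁ + w₂) ∈ closure (S n) := by
    intro w₁ hw₁ w₂ hw₂
    obtain ⟨u, hu, hul⟩ := mem_closure_iff_seq_limit.mp hw₁
    obtain ⟨v, hv, hvl⟩ := mem_closure_iff_seq_limit.mp hw₂
    refine mem_closure_iff_seq_limit.mpr
      ⟨fun k => (1/2 : ℝ) • (u k + v k), fun k => ?_, (hul.add hvl).const_smul _⟩
    obtain ⟨y₁, z₁, hy₁, hz₁, hyn₁, hzn₁, hu₁⟩ := hu k
    obtain ⟨y₂, z₂, hy₂, hz₂, hyn₂, hzn₂, hv₂⟩ := hv k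
    refine ⟨(1/2 : ℝ) • (y₁ + y₂), (1/2 : ℝ) • (z₁ + z₂),
      hsmul _ _ (by norm_num) (add_nonneg hy₁ hy₂),
      hsmul _ _ (by norm_num) (add_nonneg hz₁ hz₂), ?_, ?_, ?_⟩
    · rw [norm_smul]
      calc ‖(1/2 : ℝ)‖ * ‖y₁ + y₂‖ ≤ (1/2) * (‖y₁‖ + ‖y₂‖) := by
            rw [Real.norm_eq_abs, abs_of_nonneg (by norm_num : (0:ℝ) ≤ 1/2)]
            exact mul_le_mul_of_nonneg_left (norm_add_le _ _) (by norm_num)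
        _ ≤ (1/2) * ((n : ℝ) + (n : ℝ)) := by
            exact mul_le_mul_of_nonneg_left (add_le_add hyn₁ hyn₂) (by norm_num)
        _ = (n : ℝ) := by ring
    · rw [norm_smul]
      calc ‖(1/2 : ℝ)‖ * ‖z₁ + z₂‖ ≤ (1/2) * (‖z₁‖ + ‖z₂‖) := by
            rw [Real.norm_eq_abs, abs_of_nonneg (by norm_num : (0:ℝ) ≤ 1/2)]
            exact mul_le_mul_of_nonneg_left (norm_add_le _ _) (by norm_num)
        _ ≤ (1/2) * ((n : ℝ) + (n : ℝ)) := by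
            exact mul_le_mul_of_nonneg_left (add_le_add hzn₁ hzn₂) (by norm_num)
        _ = (n : ℝ) := by ring
    · simp only [hu₁, hv₂, smul_add, smul_sub]
      abel
  -- the ball of radius r around 0 is inside closure (S n)
  have hkey : ∀ x : D, ‖x‖ < r → x ∈ closure (S n) := by
    intro x hx
    have h₁ : a + x ∈ closure (S n) := by
      apply hball
      rw [Metric.mem_ball, dist_eq_norm]
      simpa using hx
    have h₂ : a - x ∈ closure (S n) := by
      apply hball
      rw [Metric.mem_ball, dist_eq_norm]
      simpa using hx
    have h₃ : x - a ∈ closure (S n) := by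
      have := hsymm _ h₂
      rwa [neg_sub] at this
    have h₄ := hmid _ h₁ _ h₃
    have he : (1/2 : ℝ) • ((a + x) + (x - a)) = x := by
      have h2 : (a + x) + (x - a) = (2 : ℝ) • x := by rw [two_smul]; abel
      rw [h2, smul_smul]; norm_num
    rwa [he] at h₄
  -- the approximation property
  have happrox : ∀ w : D, ‖w‖ < r → ∃ p : D × D,
      0 ≤ p.1 ∧ 0 ≤ p.2 ∧ ‖p.1‖ ≤ (n : ℝ) ∧ ‖p.2‖ ≤ (n : ℝ) ∧
      ‖w - (p.1 - p.2)‖ < r / 2 := by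
    intro w hw
    have := Metric.mem_closure_iff.mp (hkey w hw) (r / 2) (by linarith)
    obtain ⟨s, hs, hds⟩ := this
    obtain ⟨y, z, hy, hz, hyn, hzn, hsyz⟩ := hs
    refine ⟨(y, z), hy, hz, hyn, hzn, ?_⟩
    rw [← hsyz, ← dist_eq_norm]
    exact hds
  -- iterate
  have hclaim : ∀ x : D, ‖x‖ < r → ∃ y z : D,
      0 ≤ y ∧ 0 ≤ z ∧ ‖y‖ ≤ 2 * (n : ℝ) ∧ ‖z‖ ≤ 2 * (n : ℝ) ∧ x = y - z := by
    intro x hx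
    -- choice function
    let Φ : D → D × D := fun w => if h : ‖w‖ < r then (happrox w h).choose else (0, 0)
    have hΦ : ∀ w : D, ‖w‖ < r → 0 ≤ (Φ w).1 ∧ 0 ≤ (Φ w).2 ∧ ‖(Φ w).1‖ ≤ (n : ℝ) ∧
        ‖(Φ w).2‖ ≤ (n : ℝ) ∧ ‖w - ((Φ w).1 - (Φ w).2)‖ < r / 2 := by
      intro w hw
      simp only [Φ, dif_pos hw]
      exact (happrox w hw).choose_spec
    -- residual sequence
    let res : ℕ → D := fun k => Nat.rec x (fun _ w => (2 : ℝ) • (w - ((Φ w).1 - (Φ w).2))) k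
    have hres0 : res 0 = x := rfl
    have hressucc : ∀ k, res (k+1) = (2 : ℝ) • (res k - ((Φ (res k)).1 - (Φ (res k)).2)) :=
      fun k => rfl
    have hresnorm : ∀ k, ‖res k‖ < r := by
      intro k
      induction k with
      | zero => simpa [hres0] using hx
      | succ k ih =>
        rw [hressucc k, norm_smul]
        have := (hΦ (res k) ih).2.2.2.2
        rw [Real.norm_eq_abs, abs_of_nonneg (by norm_num : (0:ℝ) ≤ 2)]
        linarith
    -- partial sums
    have hsum : ∀ k, x - ∑ j ∈ Finset.range k,
        ((1/2 : ℝ)^j) • ((Φ (res j)).1 - (Φ (res j)).2) = ((1/2 : ℝ)^k) • res k := by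
      intro k
      induction k with
      | zero => simp [hres0]
      | succ k ih =>
        rw [Finset.sum_range_succ, ← sub_sub, ih, hressucc k, smul_smul]
        rw [show (1/2 : ℝ)^(k+1) * 2 = (1/2 : ℝ)^k by ring]
        simp only [smul_sub]
    set ys : ℕ → D := fun k => ((1/2 : ℝ)^k) • (Φ (res k)).1 with hys
    set zs : ℕ → D := fun k => ((1/2 : ℝ)^k) • (Φ (res k)).2 with hzs
    have hysn : ∀ k, ‖ys k‖ ≤ (n : ℝ) * (1/2)^k := by
      intro k
      rw [hys, norm_smul, Real.norm_eq_abs, abs_of_nonneg (by positivity)]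
      rw [mul_comm]
      exact mul_le_mul_of_nonneg_right (hΦ (res k) (hresnorm k)).2.2.1 (by positivity)
    have hzsn : ∀ k, ‖zs k‖ ≤ (n : ℝ) * (1/2)^k := by
      intro k
      rw [hzs, norm_smul, Real.norm_eq_abs, abs_of_nonneg (by positivity)]
      rw [mul_comm]
      exact mul_le_mul_of_nonneg_right (hΦ (res k) (hresnorm k)).2.2.2.1 (by positivity)
    have hgeo : Summable (fun k : ℕ => (n : ℝ) * (1/2)^k) :=
      (summable_geometric_of_lt_one (by norm_num) (by norm_num)).mul_left _
    have hysum : Summable ys := Summable.of_norm_bounded hgeo hysn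
    have hzsum : Summable zs := Summable.of_norm_bounded hgeo hzsn
    refine ⟨∑' k, ys k, ∑' k, zs k, ?_, ?_, ?_, ?_, ?_⟩
    · exact tcone_sum_nonneg hclosed hysum fun k =>
        hsmul _ _ (by positivity) (hΦ (res k) (hresnorm k)).1
    · exact tcone_sum_nonneg hclosed hzsum fun k =>
        hsmul _ _ (by positivity) (hΦ (res k) (hresnorm k)).2.1
    · calc ‖∑' k, ys k‖ ≤ ∑' k, ‖ys k‖ :=
            norm_tsum_le_tsum_norm (hgeo.of_nonneg_of_le (fun k => norm_nonneg _) hysn)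
        _ ≤ ∑' k : ℕ, (n : ℝ) * (1/2)^k :=
            Summable.tsum_le_tsum hysn (hgeo.of_nonneg_of_le (fun k => norm_nonneg _) hysn) hgeo
        _ = 2 * (n : ℝ) := by
            rw [tsum_mul_left, tsum_geometric_of_lt_one (by norm_num) (by norm_num)]
            norm_num; ring
    · calc ‖∑' k, zs k‖ ≤ ∑' k, ‖zs k‖ :=
            norm_tsum_le_tsum_norm (hgeo.of_nonneg_of_le (fun k => norm_nonneg _) hzsn)
        _ ≤ ∑' k : ℕ, (n : ℝ) * (1/2)^k :=
            Summable.tsum_le_tsum hzsn (hgeo.of_nonneg_of_le (fun k => norm_nonneg _) hzsn) hgeo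
        _ = 2 * (n : ℝ) := by
            rw [tsum_mul_left, tsum_geometric_of_lt_one (by norm_num) (by norm_num)]
            norm_num; ring
    · -- x = ∑ ys - ∑ zs
      have hP : Tendsto (fun k => ∑ j ∈ Finset.range k, (ys j - zs j)) atTop
          (𝓝 ((∑' k, ys k) - ∑' k, zs k)) := by
        have := (hysum.hasSum.tendsto_sum_nat).sub (hzsum.hasSum.tendsto_sum_nat)
        simpa [Finset.sum_sub_distrib] using this
      have hP2 : Tendsto (fun k => ∑ j ∈ Finset.range k, (ys j - zs j)) atTop (𝓝 x) := by
        have heq : ∀ k, ∑ j ∈ Finset.range k, (ys j - zs j)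
            = x - ((1/2 : ℝ)^k) • res k := by
          intro k
          have := hsum k
          have h2 : ∑ j ∈ Finset.range k, (ys j - zs j)
              = ∑ j ∈ Finset.range k, ((1/2 : ℝ)^j) • ((Φ (res j)).1 - (Φ (res j)).2) := by
            refine Finset.sum_congr rfl fun j _ => ?_
            rw [hys, hzs, smul_sub]
          rw [h2, eq_sub_iff_add_eq, ← this]
          abel
        rw [show (fun k => ∑ j ∈ Finset.range k, (ys j - zs j))
            = fun k => x - ((1/2 : ℝ)^k) • res k from funext heq]
        have hz : Tendsto (fun k => ((1/2 : ℝ)^k) • res k) atTop (𝓝 0) := by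
          refine squeeze_zero_norm (a := fun k => r * (1/2)^k) (fun k => ?_) ?_
          · rw [norm_smul, Real.norm_eq_abs, abs_of_nonneg (by positivity), mul_comm]
            exact mul_le_mul_of_nonneg_right (hresnorm k).le (by positivity)
          · have := (tendsto_pow_atTop_nhds_zero_of_lt_one
              (by norm_num : (0:ℝ) ≤ 1/2) (by norm_num)).const_mul r
            simpa using this
        simpa using tendsto_const_nhds.sub hz
      exact tendsto_nhds_unique hP2 hP
  -- scaling
  refine ⟨4 * (n : ℝ) / r + 1, by positivity, fun x => ?_⟩
  by_cases hx : x = 0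
  · exact ⟨0, 0, le_rfl, le_rfl, by simp [hx], by simp; positivity, by simp; positivity⟩
  · have hxn : 0 < ‖x‖ := norm_pos_iff.mpr hx
    set c : ℝ := r / (2 * ‖x‖) with hc
    have hcpos : 0 < c := by positivity
    have hcx : c * ‖x‖ = r / 2 := by rw [hc]; field_simp
    have hnu : ‖c • x‖ < r := by
      rw [norm_smul, Real.norm_eq_abs, abs_of_pos hcpos, hcx]
      linarith
    obtain ⟨y', z', hy', hz', hyb, hzb, hdec⟩ := hclaim (c • x) hnu
    have hcinv : c⁻¹ = 2 * ‖x‖ / r := by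
      rw [hc]
      field_simp
    have hbound : ∀ w : D, ‖w‖ ≤ 2 * (n : ℝ) →
        ‖c⁻¹ • w‖ ≤ (4 * (n : ℝ) / r + 1) * ‖x‖ := by
      intro w hw
      rw [norm_smul, Real.norm_eq_abs, abs_of_pos (inv_pos.mpr hcpos)]
      calc c⁻¹ * ‖w‖ ≤ c⁻¹ * (2 * (n : ℝ)) :=
            mul_le_mul_of_nonneg_left hw (by positivity)
        _ = (4 * (n : ℝ) / r) * ‖x‖ := by rw [hcinv]; field_simp; ring
        _ ≤ (4 * (n : ℝ) / r + 1) * ‖x‖ :=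
            mul_le_mul_of_nonneg_right (by linarith) hxn.le
    refine ⟨c⁻¹ • y', c⁻¹ • z', hsmul c⁻¹ y' (by positivity) hy',
      hsmul c⁻¹ z' (by positivity) hz', ?_, hbound _ hyb, hbound _ hzb⟩
    have hxx : c⁻¹ • (c • x) = x := by
      rw [smul_smul, inv_mul_cancel₀ (ne_of_gt hcpos), one_smul]
    rw [← hxx, hdec, smul_sub]

end Helpers

/-- An order bounded linear map from an ordered Banach space with closed generating cone
to an ordered Banach space with closed cone is continuous. -/
theorem orderBounded_linear_continuous
    {D₁ D₂ : Type*}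
    [NormedAddCommGroup D₁] [NormedSpace ℝ D₁] [CompleteSpace D₁]
    [PartialOrder D₁] [CovariantClass D₁ D₁ (· + ·) (· ≤ ·)]
    [NormedAddCommGroup D₂] [NormedSpace ℝ D₂] [CompleteSpace D₂]
    [PartialOrder D₂] [CovariantClass D₂ D₂ (· + ·) (· ≤ ·)]
    (hsmul₁ : ∀ (c : ℝ) (x : D₁), 0 ≤ c → 0 ≤ x → 0 ≤ c • x)
    (hsmul₂ : ∀ (c : ℝ) (x : D₂), 0 ≤ c → 0 ≤ x → 0 ≤ c • x)
    (hclosed₁ : IsClosed {x : D₁ | 0 ≤ x})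
    (hgen₁ : ∀ x : D₁, ∃ y z : D₁, 0 ≤ y ∧ 0 ≤ z ∧ x = y - z)
    (hclosed₂ : IsClosed {x : D₂ | 0 ≤ x})
    (T : D₁ →ₗ[ℝ] D₂)
    (hob : ∀ u v : D₁, ∃ p q : D₂, ∀ x ∈ Set.Icc u v, T x ∈ Set.Icc p q) :
    Continuous T := by
  classical
  obtain ⟨M, hMpos, hM⟩ := ando hsmul₁ hclosed₁ hgen₁
  apply T.continuous_of_isClosed_graph
  apply IsSeqClosed.isClosed
  intro u pt hu hup
  rw [SetLike.mem_coe, LinearMap.mem_graph_iff]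
  -- reduce to showing v = 0
  set w : ℕ → D₁ := fun k => (u k).1 - pt.1 with hw
  set v : D₂ := pt.2 - T pt.1 with hv
  have h1 : Tendsto (fun k => (u k).1) atTop (𝓝 pt.1) :=
    (continuous_fst.tendsto pt).comp hup
  have h2 : Tendsto (fun k => (u k).2) atTop (𝓝 pt.2) :=
    (continuous_snd.tendsto pt).comp hup
  have hw0 : Tendsto w atTop (𝓝 0) := by
    have := h1.sub_const pt.1
    simpa [hw] using this
  have hTw : Tendsto (fun k => T (w k)) atTop (𝓝 v) := by
    have heq : ∀ k, T (w k) = (u k).2 - T pt.1 := by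
      intro k
      have := (T.mem_graph_iff (u k)).mp (hu k)
      rw [hw]; simp only [map_sub, ← this]
    rw [funext heq]
    exact h2.sub_const _
  suffices hv0 : v = 0 by
    rw [hv, sub_eq_zero] at hv0
    exact hv0
  -- extract rapidly converging subsequence
  have hev : ∀ m : ℕ, ∀ᶠ k in atTop, ‖w k‖ < (1/4 : ℝ)^m :=
    fun m => (NormedAddCommGroup.tendsto_nhds_zero.mp hw0) _ (by positivity)
  obtain ⟨φ, hφmono, hφ⟩ := Filter.extraction_forall_of_eventually hev
  choose ys zs hys hzs hdec hyb hzb using fun k => hM (w (φ k))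
  have hybound : ∀ k, ‖ys k‖ ≤ M * (1/4 : ℝ)^k := fun k =>
    (hyb k).trans (mul_le_mul_of_nonneg_left (hφ k).le hMpos.le)
  have hzbound : ∀ k, ‖zs k‖ ≤ M * (1/4 : ℝ)^k := fun k =>
    (hzb k).trans (mul_le_mul_of_nonneg_left (hφ k).le hMpos.le)
  have hTwφ : Tendsto (fun k => T (w (φ k))) atTop (𝓝 v) :=
    hTw.comp hφmono.tendsto_atTop
  -- the dominating elements
  have hgeo : Summable (fun k : ℕ => M * (1/2 : ℝ)^k) :=
    (summable_geometric_of_lt_one (by norm_num) (by norm_num)).mul_left _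
  have key : ∀ (s : ℕ → D₁), (∀ k, 0 ≤ s k) → (∀ k, ‖s k‖ ≤ M * (1/4 : ℝ)^k) →
      ∃ p q : D₂, ∀ k, (1/2 : ℝ)^k • p ≤ T (s k) ∧ T (s k) ≤ (1/2 : ℝ)^k • q := by
    intro s hs hsb
    set Y : ℕ → D₁ := fun k => (2 : ℝ)^k • s k with hY
    have hYn : ∀ k, ‖Y k‖ ≤ M * (1/2 : ℝ)^k := by
      intro k
      rw [hY, norm_smul, Real.norm_eq_abs, abs_of_nonneg (by positivity)]
      calc (2:ℝ)^k * ‖s k‖ ≤ (2:ℝ)^k * (M * (1/4:ℝ)^k) :=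
            mul_le_mul_of_nonneg_left (hsb k) (by positivity)
        _ = M * (1/2 : ℝ)^k := by
            rw [show (2:ℝ)^k * (M * (1/4:ℝ)^k) = M * ((2 * (1/4))^k) by
              rw [mul_pow]; ring]
            norm_num
    have hYsum : Summable Y := Summable.of_norm_bounded hgeo hYn
    have hYpos : ∀ k, 0 ≤ Y k := fun k => hsmul₁ _ _ (by positivity) (hs k)
    set U : D₁ := ∑' k, Y k with hU
    have hUpos : 0 ≤ U := tcone_sum_nonneg hclosed₁ hYsum hYpos
    have hYle : ∀ k, Y k ≤ U := fun k => cone_le_tsum hclosed₁ hYsum hYpos k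
    obtain ⟨p, q, hpq⟩ := hob 0 U
    refine ⟨p, q, fun k => ?_⟩
    have hmem := hpq (Y k) ⟨hYpos k, hYle k⟩
    have hTs : T (s k) = (1/2 : ℝ)^k • T (Y k) := by
      rw [hY, map_smul, smul_smul]
      rw [show (1/2 : ℝ)^k * (2:ℝ)^k = 1 by
        rw [← mul_pow]; norm_num]
      rw [one_smul]
    constructor
    · rw [hTs]
      exact cone_smul_le_smul hsmul₂ (by positivity) hmem.1
    · rw [hTs]
      exact cone_smul_le_smul hsmul₂ (by positivity) hmem.2
  obtain ⟨p₁, q₁, hpq₁⟩ := key ys hys hybound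
  obtain ⟨p₂, q₂, hpq₂⟩ := key zs hzs hzbound
  have hTweq : ∀ k, T (w (φ k)) = T (ys k) - T (zs k) := by
    intro k
    rw [← map_sub, ← hdec k]
  have hlow : ∀ k, (1/2 : ℝ)^k • (p₁ - q₂) ≤ T (w (φ k)) := by
    intro k
    rw [hTweq k, smul_sub]
    exact sub_le_sub (hpq₁ k).1 (hpq₂ k).2
  have hhigh : ∀ k, T (w (φ k)) ≤ (1/2 : ℝ)^k • (q₁ - p₂) := by
    intro k
    rw [hTweq k, smul_sub]
    exact sub_le_sub (hpq₁ k).2 (hpq₂ k).1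
  have hpow : ∀ c : D₂, Tendsto (fun k => (1/2 : ℝ)^k • c) atTop (𝓝 0) := by
    intro c
    have := (tendsto_pow_atTop_nhds_zero_of_lt_one
      (by norm_num : (0:ℝ) ≤ 1/2) (by norm_num)).smul_const c
    simpa using this
  have hvnn : 0 ≤ v := by
    have hL : Tendsto (fun k => T (w (φ k)) - (1/2 : ℝ)^k • (p₁ - q₂)) atTop (𝓝 v) := by
      have := hTwφ.sub (hpow (p₁ - q₂))
      simpa using this
    exact hclosed₂.mem_of_tendsto hL
      (Eventually.of_forall fun k => sub_nonneg.mpr (hlow k))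
  have hvnp : 0 ≤ -v := by
    have hL : Tendsto (fun k => (1/2 : ℝ)^k • (q₁ - p₂) - T (w (φ k))) atTop (𝓝 (-v)) := by
      have := (hpow (q₁ - p₂)).sub hTwφ
      simpa using this
    exact hclosed₂.mem_of_tendsto hL
      (Eventually.of_forall fun k => sub_nonneg.mpr (hhigh k))
  exact le_antisymm (neg_nonneg.mp hvnp) hvnn
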